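/- Let 0 < α < 1, let u : ℝ → ℝ be a C² 2π-periodic function, and let ρ : ℝ → ℝ be measurable with 0 < c₀ ≤ ρ(y) ≤ C₀ for all y. Suppose x₊ is a point at which |u'| attains its global maximum: |u'(x₊)| = max_y |u'(y)|. Then u'(x₊) · ∫_ℝ ρ(x₊+z)(u'(x₊+z) − u'(x₊)) |z|^{−(1+α)} dz ≤ −(c₀/2) · D_α u'(x₊), where D_α u'(x) = ∫_ℝ |u'(x) − u'(x+z)|² |z|^{−(1+α)} dz. -/

import Mathlib

open Real MeasureTheory
open Set

/-- Commutator (alignment) forcing `T(ρ,u)(x) = ∫ ρ(x+z)(u(x+z)-u(x))|z|^{-(1+α)} dz`. -/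
noncomputable def commT (α : ℝ) (ρ u : ℝ → ℝ) (x : ℝ) : ℝ :=
  ∫ z : ℝ, ρ (x + z) * (u (x + z) - u x) / |z| ^ (1 + α)

/-- Fractional Laplacian `Λ^α f(x) = ∫ (f(x) - f(x+z))|z|^{-(1+α)} dz`. -/
noncomputable def fracLap (α : ℝ) (f : ℝ → ℝ) (x : ℝ) : ℝ :=
  ∫ z : ℝ, (f x - f (x + z)) / |z| ^ (1 + α)

/-- Dissipation functional `D_α g(x) = ∫ |g(x) - g(x+z)|² |z|^{-(1+α)} dz`. -/
noncomputable def dissip (α : ℝ) (g : ℝ → ℝ) (x : ℝ) : ℝ :=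
  ∫ z : ℝ, (g x - g (x + z)) ^ 2 / |z| ^ (1 + α)

/-- The fractional Euler alignment system holds at the point `(x,t)`:
`ρ_t + (ρu)_x = 0` and `u_t + u u_x = T(ρ,u)`. -/
def IsEulerAlignSol (α : ℝ) (ρ u : ℝ → ℝ → ℝ) (x t : ℝ) : Prop :=
  deriv (fun s => ρ x s) t + deriv (fun y => ρ y t * u y t) x = 0 ∧
  deriv (fun s => u x s) t + u x t * deriv (fun y => u y t) x
    = commT α (fun y => ρ y t) (fun y => u y t) x


/-- at a point `x₊` of global maximum of `|u'|`, the elliptic term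
`u'(x₊) · ∫ ρ(x₊+z)(u'(x₊+z) - u'(x₊))|z|^{-(1+α)} dz` is dominated by
`-(c₀/2) D_α u'(x₊)`. -/
theorem dissipation_at_max
    (α : ℝ) (hα₀ : 0 < α) (hα₁ : α < 1)
    (u ρ : ℝ → ℝ) (c₀ C₀ : ℝ) (hc₀ : 0 < c₀)
    (hu : ContDiff ℝ 2 u) (huper : Function.Periodic u (2 * π))
    (hρmeas : Measurable ρ)
    (hρbdd : ∀ y, c₀ ≤ ρ y ∧ ρ y ≤ C₀)
    (xp : ℝ) (hmax : ∀ y, |deriv u y| ≤ |deriv u xp|) :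
    deriv u xp *
        ∫ z : ℝ, ρ (xp + z) * (deriv u (xp + z) - deriv u xp) / |z| ^ (1 + α)
      ≤ -(c₀ / 2) * dissip α (deriv u) xp := by
  simp only [dissip]
  -- derivative setup
  have hu' : ContDiff ℝ (1 + 1) u := by
    have : ((1 : WithTop ℕ∞) + 1) = 2 := by norm_num
    rw [this]; exact hu
  obtain ⟨hudiff, -, hg1⟩ := contDiff_succ_iff_deriv.mp hu'
  set g : ℝ → ℝ := deriv u with hgdef
  obtain ⟨hgdiff, hg'cont⟩ := contDiff_one_iff_deriv.mp hg1
  have hgcont : Continuous g := hg1.continuous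
  -- periodicity
  have hgper : Function.Periodic g (2 * π) := by
    intro y
    have h1 : (fun x => u (x + 2 * π)) = u := funext fun x => huper x
    have h2 := deriv_comp_add_const (f := u) (a := 2 * π) (x := y)
    rw [h1] at h2
    exact h2.symm
  have hg'per : Function.Periodic (deriv g) (2 * π) := by
    intro y
    have h1 : (fun x => g (x + 2 * π)) = g := funext fun x => hgper x
    have h2 := deriv_comp_add_const (f := g) (a := 2 * π) (x := y)
    rw [h1] at h2
    exact h2.symm
  -- bound on second derivative and Lipschitz property of g
  obtain ⟨L, hL⟩ : ∃ L, ∀ y, |deriv g y| ≤ L := by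
    obtain ⟨L, hL⟩ := (isCompact_Icc (a := (0:ℝ)) (b := 2 * π)).exists_bound_of_continuousOn
      hg'cont.continuousOn
    refine ⟨L, fun y => ?_⟩
    obtain ⟨z, hz, hzy⟩ := hg'per.exists_mem_Ico₀ (by positivity) y
    rw [hzy]
    simpa [Real.norm_eq_abs] using hL z ⟨hz.1, hz.2.le⟩
  have hL0 : 0 ≤ L := le_trans (abs_nonneg _) (hL 0)
  have hlip : ∀ y z : ℝ, |g y - g z| ≤ L * |y - z| := fun y z => by
    have h := Convex.norm_image_sub_le_of_norm_deriv_le (f := g) (s := Set.univ)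
      (fun x _ => hgdiff x) (fun x _ => by simpa [Real.norm_eq_abs] using hL x)
      convex_univ (Set.mem_univ z) (Set.mem_univ y)
    simpa [Real.norm_eq_abs] using h
  -- constants
  have hC₀pos : 0 < C₀ := hc₀.trans_le ((hρbdd 0).1.trans (hρbdd 0).2)
  set M : ℝ := |g xp| with hMdef
  have hM0 : 0 ≤ M := abs_nonneg _
  -- the dominating function
  set D : ℝ → ℝ := fun z => min ((|z| ^ α)⁻¹) ((|z| ^ (1+α))⁻¹) with hD
  have hDmeas : Measurable D :=
    ((continuous_abs.rpow_const fun _ => Or.inr hα₀.le).measurable.inv).min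
      ((continuous_abs.rpow_const fun _ => Or.inr (by linarith)).measurable.inv)
  have hDnonneg : ∀ z, 0 ≤ D z := fun z =>
    le_min (inv_nonneg.2 (rpow_nonneg (abs_nonneg z) _))
      (inv_nonneg.2 (rpow_nonneg (abs_nonneg z) _))
  have hDint : Integrable D := by
    have hIoi : IntegrableOn D (Ioi 0) := by
      rw [← Set.Ioc_union_Ioi_eq_Ioi (zero_le_one (α := ℝ)), integrableOn_union]
      constructor
      · have hint : IntegrableOn (fun x : ℝ => x ^ (-α)) (Ioc 0 1) := by
          have h := intervalIntegral.intervalIntegrable_rpow' (r := -α) (by linarith)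
            (a := 0) (b := 1)
          rwa [intervalIntegrable_iff_integrableOn_Ioc_of_le zero_le_one] at h
        apply Integrable.mono' hint hDmeas.aestronglyMeasurable.restrict
        filter_upwards [ae_restrict_mem measurableSet_Ioc] with x hx
        rw [Real.norm_eq_abs, abs_of_nonneg (hDnonneg x)]
        calc D x ≤ (|x| ^ α)⁻¹ := min_le_left _ _
          _ = x ^ (-α) := by rw [abs_of_pos hx.1, ← Real.rpow_neg hx.1.le]
      · have hint : IntegrableOn (fun x : ℝ => x ^ (-(1+α))) (Ioi 1) :=
          (integrableOn_Ioi_rpow_iff zero_lt_one).mpr (by linarith)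
        apply Integrable.mono' hint hDmeas.aestronglyMeasurable.restrict
        filter_upwards [ae_restrict_mem measurableSet_Ioi] with x hx
        have hx0 : (0:ℝ) < x := lt_trans zero_lt_one hx
        rw [Real.norm_eq_abs, abs_of_nonneg (hDnonneg x)]
        calc D x ≤ (|x| ^ (1+α))⁻¹ := min_le_right _ _
          _ = x ^ (-(1+α)) := by rw [abs_of_pos hx0, ← Real.rpow_neg hx0.le]
    rw [← integrableOn_univ, ← Set.Iio_union_Ici (a := (0:ℝ)), integrableOn_union,
      integrableOn_Ici_iff_integrableOn_Ioi]
    refine ⟨?_, hIoi⟩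
    rw [← (Measure.measurePreserving_neg (volume : Measure ℝ)).integrableOn_comp_preimage
      (Homeomorph.neg ℝ).measurableEmbedding]
    have hcomp : D ∘ Neg.neg = D := funext fun z => by simp [hD, abs_neg]
    simpa [hcomp, Set.neg_preimage, Set.neg_Iio] using hIoi
  -- the integrands
  set F1 : ℝ → ℝ := fun z => ρ (xp + z) * (g (xp + z) - g xp) / |z| ^ (1 + α) with hF1
  set F2 : ℝ → ℝ := fun z => (g xp - g (xp + z)) ^ 2 / |z| ^ (1 + α) with hF2
  have hwmeas : Measurable fun z : ℝ => |z| ^ (1 + α) :=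
    (continuous_abs.rpow_const fun _ => Or.inr (by linarith)).measurable
  have hshift : Measurable fun z : ℝ => g (xp + z) :=
    hgcont.measurable.comp (measurable_const.add measurable_id)
  have hF1meas : AEStronglyMeasurable F1 volume :=
    (((hρmeas.comp (measurable_const.add measurable_id)).mul
      (hshift.sub measurable_const)).div hwmeas).aestronglyMeasurable
  have hF2meas : AEStronglyMeasurable F2 volume :=
    (((measurable_const.sub hshift).pow_const 2).div hwmeas).aestronglyMeasurable
  -- pointwise difference bound
  have habs : ∀ z : ℝ, |g (xp + z) - g xp| ≤ min (L * |z|) (2 * M) := by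
    intro z
    refine le_min ?_ ?_
    · simpa using hlip (xp + z) xp
    · calc |g (xp + z) - g xp| ≤ |g (xp + z)| + |g xp| := abs_sub _ _
        _ ≤ M + M := add_le_add (hmax _) le_rfl
        _ = 2 * M := by ring
  -- basic positivity
  have hwpos : ∀ z : ℝ, z ≠ 0 → 0 < |z| ^ (1 + α) := fun z hz =>
    Real.rpow_pos_of_pos (abs_pos.mpr hz) _
  -- norm bounds for F1 and F2
  set K1 : ℝ := C₀ * max L (2 * M) with hK1
  set K2 : ℝ := max (L ^ 2) ((2 * M) ^ 2) with hK2
  have hbound1 : ∀ z : ℝ, ‖F1 z‖ ≤ K1 * D z := by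
    intro z
    by_cases hz : z = 0
    · simp [hF1, hD, hz, abs_zero, Real.zero_rpow hα₀.ne',
        Real.zero_rpow (show (1:ℝ) + α ≠ 0 by linarith)]
    · have hzpos : 0 < |z| := abs_pos.mpr hz
      have hw : 0 < |z| ^ (1 + α) := hwpos z hz
      have hρpos : 0 < ρ (xp + z) := hc₀.trans_le (hρbdd _).1
      have hwsplit : |z| ^ (1 + α) = |z| * |z| ^ α := by
        rw [Real.rpow_add hzpos, Real.rpow_one]
      have hαpos : (0:ℝ) < |z| ^ α := Real.rpow_pos_of_pos hzpos _
      rw [hF1]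
      rw [Real.norm_eq_abs, abs_div, abs_mul, abs_of_pos hρpos, abs_of_pos hw]
      rcases le_total |z| 1 with h1 | h1
      · have hmin : D z = (|z| ^ α)⁻¹ := min_eq_left (by
          apply inv_anti₀ hw
          exact Real.rpow_le_rpow_of_exponent_ge hzpos h1 (by linarith))
        rw [hmin]
        calc ρ (xp + z) * |g (xp + z) - g xp| / (|z| ^ (1 + α))
            ≤ C₀ * (L * |z|) / (|z| ^ (1 + α)) := by
              gcongr
              · exact (hρbdd _).2
              · exact (habs z).trans (min_le_left _ _)
          _ = (C₀ * L) * (|z| ^ α)⁻¹ := by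
              rw [hwsplit]; field_simp
          _ ≤ K1 * (|z| ^ α)⁻¹ := by
              apply mul_le_mul_of_nonneg_right _ (inv_nonneg.2 hαpos.le)
              exact mul_le_mul_of_nonneg_left (le_max_left _ _) hC₀pos.le
      · have hmin : D z = (|z| ^ (1 + α))⁻¹ := min_eq_right (by
          apply inv_anti₀ hαpos
          exact Real.rpow_le_rpow_of_exponent_le h1 (by linarith))
        rw [hmin]
        calc ρ (xp + z) * |g (xp + z) - g xp| / (|z| ^ (1 + α))
            ≤ C₀ * (2 * M) / (|z| ^ (1 + α)) := by
              gcongr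
              · exact (hρbdd _).2
              · exact (habs z).trans (min_le_right _ _)
          _ = (C₀ * (2 * M)) * (|z| ^ (1 + α))⁻¹ := div_eq_mul_inv _ _
          _ ≤ K1 * (|z| ^ (1 + α))⁻¹ := by
              apply mul_le_mul_of_nonneg_right _ (inv_nonneg.2 hw.le)
              exact mul_le_mul_of_nonneg_left (le_max_right _ _) hC₀pos.le
  have hbound2 : ∀ z : ℝ, ‖F2 z‖ ≤ K2 * D z := by
    intro z
    by_cases hz : z = 0
    · simp [hF2, hD, hz, abs_zero, Real.zero_rpow hα₀.ne',
        Real.zero_rpow (show (1:ℝ) + α ≠ 0 by linarith)]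
    · have hzpos : 0 < |z| := abs_pos.mpr hz
      have hw : 0 < |z| ^ (1 + α) := hwpos z hz
      have hwsplit : |z| ^ (1 + α) = |z| * |z| ^ α := by
        rw [Real.rpow_add hzpos, Real.rpow_one]
      have hαpos : (0:ℝ) < |z| ^ α := Real.rpow_pos_of_pos hzpos _
      have hsq : (g xp - g (xp + z)) ^ 2 = |g (xp + z) - g xp| ^ 2 := by
        rw [← abs_sub_comm, sq_abs]
      rw [hF2]
      rw [Real.norm_eq_abs, abs_of_nonneg (div_nonneg (sq_nonneg _) hw.le), hsq]
      rcases le_total |z| 1 with h1 | h1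
      · have hmin : D z = (|z| ^ α)⁻¹ := min_eq_left (by
          apply inv_anti₀ hw
          exact Real.rpow_le_rpow_of_exponent_ge hzpos h1 (by linarith))
        rw [hmin]
        calc |g (xp + z) - g xp| ^ 2 / (|z| ^ (1 + α))
            ≤ (L * |z|) ^ 2 / (|z| ^ (1 + α)) :=
              div_le_div_of_nonneg_right
                (pow_le_pow_left₀ (abs_nonneg _) ((habs z).trans (min_le_left _ _)) 2) hw.le
          _ = (L ^ 2 * |z|) * (|z| ^ α)⁻¹ := by
              rw [hwsplit]; field_simp
          _ ≤ K2 * (|z| ^ α)⁻¹ := by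
              apply mul_le_mul_of_nonneg_right _ (inv_nonneg.2 hαpos.le)
              calc L ^ 2 * |z| ≤ L ^ 2 * 1 := by
                    exact mul_le_mul_of_nonneg_left h1 (sq_nonneg _)
                _ = L ^ 2 := mul_one _
                _ ≤ K2 := le_max_left _ _
      · have hmin : D z = (|z| ^ (1 + α))⁻¹ := min_eq_right (by
          apply inv_anti₀ hαpos
          exact Real.rpow_le_rpow_of_exponent_le h1 (by linarith))
        rw [hmin]
        calc |g (xp + z) - g xp| ^ 2 / (|z| ^ (1 + α))
            ≤ (2 * M) ^ 2 / (|z| ^ (1 + α)) :=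
              div_le_div_of_nonneg_right
                (pow_le_pow_left₀ (abs_nonneg _) ((habs z).trans (min_le_right _ _)) 2) hw.le
          _ = (2 * M) ^ 2 * (|z| ^ (1 + α))⁻¹ := div_eq_mul_inv _ _
          _ ≤ K2 * (|z| ^ (1 + α))⁻¹ :=
              mul_le_mul_of_nonneg_right (le_max_right _ _) (inv_nonneg.2 hw.le)
  -- integrability of the integrands
  have hF1int : Integrable F1 := (hDint.const_mul K1).mono' hF1meas (ae_of_all _ hbound1)
  have hF2int : Integrable F2 := (hDint.const_mul K2).mono' hF2meas (ae_of_all _ hbound2)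
  -- conclude
  rw [← integral_const_mul, ← integral_const_mul]
  apply integral_mono (hF1int.const_mul _) (hF2int.const_mul _)
  intro z
  show g xp * F1 z ≤ -(c₀ / 2) * F2 z
  by_cases hz : z = 0
  · simp [hF1, hF2, hz]
  · have hw : 0 < |z| ^ (1 + α) := hwpos z hz
    rw [hF1, hF2]
    simp only
    rw [mul_div_assoc', mul_div_assoc']
    rw [div_le_div_iff₀ hw hw]
    have ha2 : g (xp + z) ^ 2 ≤ g xp ^ 2 := by
      rw [← sq_abs (g (xp + z)), ← sq_abs (g xp)]
      exact pow_le_pow_left₀ (abs_nonneg _) (hmax _) 2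
    have hρge : c₀ ≤ ρ (xp + z) := (hρbdd _).1
    nlinarith [mul_nonneg (sub_nonneg.2 hρge) (sq_nonneg (g (xp + z) - g xp)),
      mul_nonneg (hc₀.le.trans hρge) (sub_nonneg.2 ha2), hw.le,
      mul_nonneg (mul_nonneg (sub_nonneg.2 hρge) (sq_nonneg (g (xp + z) - g xp))) hw.le,
      mul_nonneg (mul_nonneg (hc₀.le.trans hρge) (sub_nonneg.2 ha2)) hw.le]
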